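/- Let λ ∈ [0,1], ε ∈ [0, π/4], c = cos ε, and θ = π/2 - ε/2. Then h(λ sin²θ + (1-λ)cos²θ) + h(λ sin²(θ+ε) + (1-λ)cos²(θ+ε)) = ln 4 + η(1 + c - 2λc) + η(1 - c + 2λc), where η(x) = -x ln x. (Subtracting 2h(λ) from both sides gives the uncertainty bound of Eq. (eq:eta): ln 4 + η(1+c-2λc) + η(1-c+2λc) - 2h(λ).) -/
import Mathlib

open Real

/-- `η(x) = -x ln x` (natural logarithm). -/
noncomputable def eta (x : ℝ) : ℝ := -(x * Real.log x)

/-- Binary entropy `h(x) = η(x) + η(1-x)`. -/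
noncomputable def binEnt (x : ℝ) : ℝ := eta x + eta (1 - x)

lemma eta_two (x : ℝ) : eta (2*x) = 2 * eta x - x * Real.log 4 := by
  have h4 : Real.log 4 = 2 * Real.log 2 := by
    rw [show (4:ℝ) = 2^2 by norm_num, Real.log_pow]; push_cast; ring
  rcases eq_or_ne x 0 with h | h
  · simp [eta, h]
  · unfold eta
    rw [Real.log_mul two_ne_zero h, h4]
    ring

theorem shannon_value_at_critical_point
    (lam : ℝ) (hlam : lam ∈ Set.Icc (0:ℝ) 1)
    (ε : ℝ) (hε : ε ∈ Set.Icc (0:ℝ) (π/4))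
    (c : ℝ) (hc : c = Real.cos ε)
    (θ : ℝ) (hθ : θ = π/2 - ε/2) :
    binEnt (lam * Real.sin θ ^ 2 + (1 - lam) * Real.cos θ ^ 2)
      + binEnt (lam * Real.sin (θ + ε) ^ 2 + (1 - lam) * Real.cos (θ + ε) ^ 2)
      = Real.log 4 + eta (1 + c - 2*lam*c) + eta (1 - c + 2*lam*c) := by
  subst hθ hc
  have hc2 : Real.cos (ε/2) ^ 2 = 1/2 + Real.cos ε / 2 := by
    have := Real.cos_sq (ε/2)
    rwa [show 2 * (ε/2) = ε by ring] at this
  have hs2 : Real.sin (ε/2) ^ 2 = 1/2 - Real.cos ε / 2 := by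
    have h := Real.sin_sq_add_cos_sq (ε/2)
    rw [hc2] at h; linarith
  have h1 : Real.sin (π/2 - ε/2) ^ 2 = 1/2 + Real.cos ε / 2 := by
    rw [Real.sin_pi_div_two_sub, hc2]
  have h2 : Real.cos (π/2 - ε/2) ^ 2 = 1/2 - Real.cos ε / 2 := by
    rw [Real.cos_pi_div_two_sub, hs2]
  have h3 : Real.sin (π/2 - ε/2 + ε) ^ 2 = 1/2 + Real.cos ε / 2 := by
    rw [show π/2 - ε/2 + ε = π/2 - (-(ε/2)) by ring, Real.sin_pi_div_two_sub,
      Real.cos_neg, hc2]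
  have h4 : Real.cos (π/2 - ε/2 + ε) ^ 2 = 1/2 - Real.cos ε / 2 := by
    rw [show π/2 - ε/2 + ε = π/2 - (-(ε/2)) by ring, Real.cos_pi_div_two_sub,
      Real.sin_neg, neg_pow, hs2]
    ring
  rw [h1, h2, h3, h4]
  set cc := Real.cos ε with hcc
  have e1 : (1 : ℝ) + cc - 2*lam*cc = 2 * ((1 - lam * (1/2 + cc/2) - (1-lam) * (1/2 - cc/2))) := by ring
  have e2 : (1 : ℝ) - cc + 2*lam*cc = 2 * (lam * (1/2 + cc/2) + (1-lam) * (1/2 - cc/2)) := by ring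
  rw [e1, e2, eta_two, eta_two]
  unfold binEnt
  have : (1 : ℝ) - (lam * (1/2 + cc/2) + (1-lam) * (1/2 - cc/2))
      = 1 - lam * (1/2 + cc/2) - (1-lam) * (1/2 - cc/2) := by ring
  rw [this]
  ring
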